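/- Every three-valued model of a disjunctively normal logic program is an HT-model, but not conversely: for the single-rule program P = {b ← ¬c} over atoms {b,c}, the pair (∅,{c}) is an HT-model of P but not a three-valued model of P. -/
import Mathlib

structure Rule (A : Type*) where
  head : Set A
  pos : Set A
  neg : Set A
  hne : head.Nonempty

/-- `(x,y)` is a three-valued model: for every rule, the four-valued truth value of
the head is `≥_t` that of the body (unfolded for consistent pairs). -/
def threeModel {A : Type*} (P : Set (Rule A)) (x y : Set A) : Prop :=
  ∀ r ∈ P,
    ((r.pos ⊆ x ∧ ∀ b ∈ r.neg, b ∉ y) → (x ∩ r.head).Nonempty) ∧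
    ((r.pos ⊆ y ∧ ∀ b ∈ r.neg, b ∉ x) → (y ∩ r.head).Nonempty)

/-- `(x,y)` is an HT-model. -/
def htModel {A : Type*} (P : Set (Rule A)) (x y : Set A) : Prop :=
  ∀ r ∈ P,
    ((r.pos ⊆ x ∧ ∀ b ∈ r.neg, b ∉ y) → (x ∩ r.head).Nonempty) ∧
    ((r.pos ⊆ y ∧ ∀ b ∈ r.neg, b ∉ y) → (y ∩ r.head).Nonempty)

theorem threeValued_models_are_HT_but_not_conversely :
    (∀ (A : Type) (P : Set (Rule A)) (x y : Set A), x ⊆ y →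
      threeModel P x y → htModel P x y) ∧
    (htModel ({⟨{0}, ∅, {1}, ⟨0, rfl⟩⟩} : Set (Rule ℕ)) ∅ {1} ∧
     ¬ threeModel ({⟨{0}, ∅, {1}, ⟨0, rfl⟩⟩} : Set (Rule ℕ)) ∅ {1}) := by
  refine ⟨fun A P x y hxy h r hr => ⟨(h r hr).1, fun ⟨h1, h2⟩ =>
    (h r hr).2 ⟨h1, fun b hb hbx => h2 b hb (hxy hbx)⟩⟩, ?_, ?_⟩
  · rintro r rfl
    exact ⟨fun ⟨_, h2⟩ => absurd rfl (h2 1 rfl), fun ⟨_, h2⟩ => absurd rfl (h2 1 rfl)⟩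
  · intro h
    have := (h _ rfl).2 ⟨Set.empty_subset _, fun b _ hb => hb⟩
    obtain ⟨a, ha, ha'⟩ := this
    simp only [Set.mem_singleton_iff] at ha ha'
    omega
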